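/- Let G be a graph without isolated vertices on vertex set X = {x_1,...,x_n}, n ≥ 2, and let G' be its complement. Then the Alexander dual ideal I(G')^∨ equals the ideal I(G)^* generated by {x_1⋯x_n/(x_i x_j) : {x_i,x_j} an edge of G} if and only if G contains no triangle. -/

import Mathlib

/-- `C` is a vertex cover of `G`: it meets every edge. -/
def IsVertexCover {V : Type*} (G : SimpleGraph V) (C : Set V) : Prop :=
  ∀ a b, G.Adj a b → a ∈ C ∨ b ∈ C

/-- `C` is a minimal vertex cover of `G`. -/
def IsMinVertexCover {V : Type*} (G : SimpleGraph V) (C : Set V) : Prop :=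
  IsVertexCover G C ∧ ∀ D : Set V, D ⊆ C → IsVertexCover G D → D = C

lemma cover_iff_clique_compl {V : Type*} (G : SimpleGraph V) (C : Set V) :
    IsVertexCover Gᶜ C ↔ G.IsClique Cᶜ := by
  constructor
  · intro h a ha b hb hab
    by_contra hadj
    rcases h a b ⟨hab, hadj⟩ with h1 | h1
    · exact ha h1
    · exact hb h1
  · rintro h a b ⟨hab, hadj⟩
    by_contra hc
    push_neg at hc
    exact hadj (h hc.1 hc.2 hab)

lemma triangle_false {V : Type*} [DecidableEq V] {G : SimpleGraph V} (hfree : G.CliqueFree 3)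
    {a b c : V} (hab : G.Adj a b) (hac : G.Adj a c) (hbc : G.Adj b c) : False :=
  hfree {a, b, c} (SimpleGraph.is3Clique_triple_iff.mpr ⟨hab, hac, hbc⟩)

theorem stmt10 (n : ℕ) (hn : 2 ≤ n) (G : SimpleGraph (Fin n))
    (hiso : ∀ v, ∃ w, G.Adj v w) :
    (∀ C : Set (Fin n), IsMinVertexCover Gᶜ C ↔
        ∃ a b, G.Adj a b ∧ C = ({a, b} : Set (Fin n))ᶜ) ↔
      G.CliqueFree 3 := by
  constructor
  · intro h t ht
    rw [SimpleGraph.is3Clique_iff] at ht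
    obtain ⟨a, b, c, hab, hac, hbc, rfl⟩ := ht
    -- extend {a,b,c} to a maximal clique
    have hS : ({K : Set (Fin n) | G.IsClique K ∧ ({a, b, c} : Set (Fin n)) ⊆ K}).Finite :=
      Set.toFinite _
    have hne : ({K : Set (Fin n) | G.IsClique K ∧ ({a, b, c} : Set (Fin n)) ⊆ K}).Nonempty := by
      refine ⟨{a, b, c}, ?_, le_refl _⟩
      intro x hx y hy hxy
      simp only [Set.mem_insert_iff, Set.mem_singleton_iff] at hx hy
      rcases hx with rfl | rfl | rfl <;> rcases hy with rfl | rfl | rfl <;>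
        first
          | exact absurd rfl hxy
          | assumption
          | exact hab.symm
          | exact hac.symm
          | exact hbc.symm
    obtain ⟨K, ⟨hKcl, hKsub⟩, hKmax⟩ := Set.Finite.exists_maximal hS hne
    have hmin : IsMinVertexCover Gᶜ Kᶜ := by
      constructor
      · rw [cover_iff_clique_compl, compl_compl]; exact hKcl
      · intro D hD hDcov
        rw [cover_iff_clique_compl] at hDcov
        have hKD : K ⊆ Dᶜ := by
          intro x hx
          exact fun hxD => (hD hxD) hx
        have : K = Dᶜ := Set.Subset.antisymm hKD (hKmax (y := Dᶜ) ⟨hDcov, hKsub.trans hKD⟩ hKD)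
        rw [this, compl_compl]
    obtain ⟨x, y, hxy, hC⟩ := (h Kᶜ).mp hmin
    have hK : K = {x, y} := by
      have := congrArg compl hC
      rwa [compl_compl, compl_compl] at this
    have ha' : a ∈ ({x, y} : Set (Fin n)) := hK ▸ hKsub (by simp)
    have hb' : b ∈ ({x, y} : Set (Fin n)) := hK ▸ hKsub (by simp)
    have hc' : c ∈ ({x, y} : Set (Fin n)) := hK ▸ hKsub (by simp)
    simp only [Set.mem_insert_iff, Set.mem_singleton_iff] at ha' hb' hc'
    rcases ha' with rfl | rfl <;> rcases hb' with rfl | rfl <;> rcases hc' with rfl | rfl <;>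
      simp_all [SimpleGraph.irrefl]
  · intro hfree C
    constructor
    · rintro ⟨hcov, hmin⟩
      rw [cover_iff_clique_compl] at hcov
      by_cases hex : ∃ a ∈ Cᶜ, ∃ b ∈ Cᶜ, a ≠ b
      · obtain ⟨a, ha, b, hb, hab⟩ := hex
        have hadj : G.Adj a b := hcov ha hb hab
        refine ⟨a, b, hadj, ?_⟩
        have hsub : Cᶜ ⊆ {a, b} := by
          intro c hc
          by_contra hcm
          simp only [Set.mem_insert_iff, Set.mem_singleton_iff, not_or] at hcm
          exact triangle_false hfree hadj (hcov ha hc (Ne.symm hcm.1))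
            (hcov hb hc (Ne.symm hcm.2))
        have hsub' : ({a, b} : Set (Fin n)) ⊆ Cᶜ := by
          rintro x (rfl | rfl)
          · exact ha
          · exact hb
        have : Cᶜ = {a, b} := Set.Subset.antisymm hsub hsub'
        rw [← this, compl_compl]
      · push_neg at hex
        exfalso
        -- Cᶜ is a subsingleton
        by_cases hem : Cᶜ = ∅
        · -- C = univ
          have hCu : C = Set.univ := by
            rw [← compl_compl C, hem, Set.compl_empty]
          obtain ⟨w, hw⟩ := hiso ⟨0, lt_of_lt_of_le two_pos hn⟩
          set v : Fin n := ⟨0, lt_of_lt_of_le two_pos hn⟩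
          have hDcov : IsVertexCover Gᶜ ({v, w} : Set (Fin n))ᶜ := by
            rw [cover_iff_clique_compl, compl_compl]
            rintro x (rfl | rfl) y (rfl | rfl) hxy
            · exact absurd rfl hxy
            · exact hw
            · exact hw.symm
            · exact absurd rfl hxy
          have := hmin _ (by rw [hCu]; exact Set.subset_univ _) hDcov
          rw [hCu] at this
          have : v ∈ ({v, w} : Set (Fin n))ᶜ := this ▸ Set.mem_univ v
          exact this (by simp)
        · obtain ⟨v, hv⟩ := Set.nonempty_iff_ne_empty.mpr hem
          have hCv : Cᶜ = {v} := by
            apply Set.Subset.antisymm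
            · intro x hx
              by_contra hxv
              exact hxv (hex x hx v hv)
            · rintro x rfl; exact hv
          obtain ⟨w, hw⟩ := hiso v
          have hDcov : IsVertexCover Gᶜ ({v, w} : Set (Fin n))ᶜ := by
            rw [cover_iff_clique_compl, compl_compl]
            rintro x (rfl | rfl) y (rfl | rfl) hxy
            · exact absurd rfl hxy
            · exact hw
            · exact hw.symm
            · exact absurd rfl hxy
          have hsub : ({v, w} : Set (Fin n))ᶜ ⊆ C := by
            rw [← compl_compl C, hCv]
            exact Set.compl_subset_compl.mpr (by simp)
          have heq := hmin _ hsub hDcov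
          have : Cᶜ = {v, w} := by
            rw [← heq, compl_compl]
          rw [hCv] at this
          have : w ∈ ({v} : Set (Fin n)) := this ▸ (by simp : w ∈ ({v, w} : Set (Fin n)))
          exact hw.ne (Set.mem_singleton_iff.mp this).symm
    · rintro ⟨a, b, hab, rfl⟩
      constructor
      · rw [cover_iff_clique_compl, compl_compl]
        rintro x (rfl | rfl) y (rfl | rfl) hxy
        · exact absurd rfl hxy
        · exact hab
        · exact hab.symm
        · exact absurd rfl hxy
      · intro D hD hDcov
        rw [cover_iff_clique_compl] at hDcov
        apply Set.Subset.antisymm hD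
        intro x hx
        by_contra hxD
        have hxD' : x ∈ Dᶜ := hxD
        have haD : a ∈ Dᶜ := fun h => (hD h) (by simp : a ∈ ({a, b} : Set (Fin n)))
        have hbD : b ∈ Dᶜ := fun h => (hD h) (by simp : b ∈ ({a, b} : Set (Fin n)))
        simp only [Set.mem_compl_iff, Set.mem_insert_iff, Set.mem_singleton_iff, not_or] at hx
        exact triangle_false hfree hab (hDcov haD hxD' (Ne.symm hx.1))
          (hDcov hbD hxD' (Ne.symm hx.2))
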